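/- Let I₁ and I₂ be N-proper ideals of R such that mAss_R(N/(I₁I₂)N) = mAss_R(N/I₁N) ∪ mAss_R(N/I₂N). If for i = 1, 2 the I_i-symbolic topology on N is equivalent to the I_i-adic topology on N, then the (I₁I₂)-symbolic topology on N is equivalent to the (I₁I₂)-adic topology on N, and the (I₁ ∩ I₂)-symbolic topology on N is equivalent to the (I₁ ∩ I₂)-adic topology on N. -/

import Mathlib

open Ideal

/-- The set of minimal associated primes of an `R`-module `M`. -/
def mAss (R : Type*) [CommRing R] (M : Type*) [AddCommGroup M] [Module R M] : Set (Ideal R) :=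
  {p | Minimal (· ∈ associatedPrimes R M) p}

/-- The `n`-th symbolic power of `I` with respect to `N`:
elements `x ∈ N` with `s • x ∈ I ^ n • N` for some `s` outside every minimal prime of
`Ass_R (N / I N)`. -/
def symbPow (R : Type*) [CommRing R] (I : Ideal R) (N : Type*) [AddCommGroup N] [Module R N]
    (n : ℕ) : Set N :=
  {x | ∃ s : R, (∀ p ∈ mAss R (N ⧸ (I • ⊤ : Submodule R N)), s ∉ p) ∧
    s • x ∈ (I ^ n • ⊤ : Submodule R N)}

/-- The `I`-symbolic topology on `N` is equivalent to the `I`-adic topology on `N`. -/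
def symbEquivAdic (R : Type*) [CommRing R] (I : Ideal R) (N : Type*) [AddCommGroup N]
    [Module R N] : Prop :=
  ∀ n : ℕ, ∃ m : ℕ, symbPow R I N m ⊆ (I ^ n • ⊤ : Submodule R N)

section Aux

variable {R : Type*} [CommRing R] {M : Type*} [AddCommGroup M] [Module R M]

/-- The submodule of elements of `M` killed by some element outside `p`. -/
def torsComp (p : Ideal R) [hp : p.IsPrime] : Submodule R M where
  carrier := {x | ∃ s ∉ p, s • x = 0}
  zero_mem' := ⟨1, (Ideal.ne_top_iff_one p).mp hp.ne_top, smul_zero 1⟩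
  add_mem' := by
    rintro x y ⟨s, hs, hsx⟩ ⟨t, ht, hty⟩
    refine ⟨s * t, fun h => (hp.mem_or_mem h).elim hs ht, ?_⟩
    have hx1 : (s * t) • x = 0 := by rw [mul_comm, mul_smul, hsx, smul_zero]
    have hy1 : (s * t) • y = 0 := by rw [mul_smul, hty, smul_zero]
    rw [smul_add, hx1, hy1, add_zero]
  smul_mem' := by
    rintro r x ⟨s, hs, hsx⟩
    exact ⟨s, hs, by rw [smul_comm, hsx, smul_zero]⟩

lemma mem_torsComp {p : Ideal R} [p.IsPrime] {x : M} :
    x ∈ (torsComp p : Submodule R M) ↔ ∃ s ∉ p, s • x = 0 := Iff.rfl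

theorem isAssociatedPrime_of_mem_minimalPrimes [IsNoetherianRing R] [Module.Finite R M]
    {p : Ideal R} (hp : p ∈ (Module.annihilator R M).minimalPrimes) :
    IsAssociatedPrime p M := by
  obtain ⟨⟨hprime, hple⟩, hmin⟩ := hp
  haveI := hprime
  set K : Submodule R M := torsComp p with hK
  -- K ≠ ⊤
  have hKne : K ≠ ⊤ := by
    intro htop
    obtain ⟨n, f, hf⟩ := Module.Finite.exists_fin (R := R) (M := M)
    have hmem : ∀ i, ∃ s ∉ p, s • f i = 0 := fun i => by
      have : f i ∈ K := htop ▸ Submodule.mem_top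
      exact this
    choose s hs hs0 using hmem
    have hsp : (∏ i, s i) ∉ p := fun h =>
      Submonoid.prod_mem p.primeCompl (fun i _ => hs i) h
    have hann : (∏ i, s i) ∈ Module.annihilator R M := by
      rw [Module.mem_annihilator]
      intro m
      have hm : m ∈ Submodule.span R (Set.range f) := hf ▸ Submodule.mem_top
      induction hm using Submodule.span_induction with
      | mem x hx =>
        obtain ⟨i, rfl⟩ := hx
        rw [← Finset.prod_erase_mul Finset.univ s (Finset.mem_univ i), mul_smul, hs0 i,
          smul_zero]
      | zero => rw [smul_zero]
      | add x y _ _ hx hy => rw [smul_add, hx, hy, add_zero]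
      | smul r x _ hx => rw [smul_comm, hx, smul_zero]
    exact hsp (hple hann)
  haveI : Nontrivial (M ⧸ K) := Submodule.Quotient.nontrivial_iff.mpr hKne
  haveI : Module.Finite R (M ⧸ K) := Module.Finite.of_surjective K.mkQ (Submodule.mkQ_surjective K)
  obtain ⟨P, hP⟩ := associatedPrimes.nonempty R (M ⧸ K)
  obtain ⟨hPprime, y, hy⟩ := isAssociatedPrime_iff.mp hP
  rw [Submodule.bot_colon'] at hy
  obtain ⟨x, rfl⟩ := Submodule.Quotient.mk_surjective K y
  -- P ≤ p
  have hPp : P ≤ p := by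
    intro r hr
    by_contra hrp
    have h0 : r • (Submodule.Quotient.mk x : M ⧸ K) = 0 :=
      (Submodule.mem_annihilator_span_singleton _ _).mp (hy ▸ hr)
    rw [← Submodule.Quotient.mk_smul, Submodule.Quotient.mk_eq_zero] at h0
    obtain ⟨t, ht, htrx⟩ := h0
    have hxK : x ∈ K := ⟨t * r, fun h => (hprime.mem_or_mem h).elim ht hrp,
      by rw [mul_smul]; exact htrx⟩
    have hz : (Submodule.Quotient.mk x : M ⧸ K) = 0 := (Submodule.Quotient.mk_eq_zero K).mpr hxK
    apply hPprime.ne_top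
    rw [hy, Ideal.eq_top_iff_one, Submodule.mem_annihilator_span_singleton, hz, smul_zero]
  have hannP : Module.annihilator R M ≤ P := by
    intro r hr
    rw [hy, Submodule.mem_annihilator_span_singleton, ← Submodule.Quotient.mk_smul,
      Module.mem_annihilator.mp hr x, Submodule.Quotient.mk_zero]
  have hPeq : P = p := le_antisymm hPp (hmin ⟨hPprime, hannP⟩ hPp)
  -- clear denominators
  have hpfg : p.FG := IsNoetherian.noetherian p
  obtain ⟨T, hT⟩ := hpfg
  have hTK : ∀ a ∈ T, ∃ t ∉ p, t • (a • x) = 0 := by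
    intro a ha
    have hap : a ∈ p := hT ▸ Submodule.subset_span ha
    have : a • (Submodule.Quotient.mk x : M ⧸ K) = 0 :=
      (Submodule.mem_annihilator_span_singleton _ _).mp (hy ▸ hPeq ▸ hap)
    rw [← Submodule.Quotient.mk_smul, Submodule.Quotient.mk_eq_zero] at this
    exact this
  choose! t ht ht0 using hTK
  have hσ : (∏ a ∈ T, t a) ∉ p := fun h =>
    Submonoid.prod_mem p.primeCompl (fun a ha => ht a ha) h
  refine isAssociatedPrime_iff.mpr ⟨hprime, (∏ a ∈ T, t a) • x, ?_⟩
  rw [Submodule.bot_colon']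
  refine le_antisymm ?_ ?_
  · rw [← hT, Ideal.span_le]
    intro a ha
    have haT : a ∈ T := ha
    classical
    have hsplit : a * ∏ b ∈ T, t b = (∏ b ∈ T.erase a, t b) * (t a * a) := by
      rw [← Finset.prod_erase_mul T t haT]; ring
    rw [SetLike.mem_coe, Submodule.mem_annihilator_span_singleton, smul_smul, hsplit,
      mul_smul, mul_smul, ht0 a haT, smul_zero]
  · intro r hr
    rw [Submodule.mem_annihilator_span_singleton, smul_smul] at hr
    have : (r * ∏ a ∈ T, t a) ∈ p := by
      rw [hPeq.symm, hy, Submodule.mem_annihilator_span_singleton,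
        ← Submodule.Quotient.mk_smul, hr, Submodule.Quotient.mk_zero]
    exact ((hprime.mem_or_mem this).resolve_right hσ)

theorem mAss_eq_minimalPrimes [IsNoetherianRing R] [Module.Finite R M] :
    mAss R M = (Module.annihilator R M).minimalPrimes := by
  ext p
  constructor
  · rintro ⟨hassoc, hmin⟩
    have hple : Module.annihilator R M ≤ p := by
      rw [← Submodule.annihilator_top]; exact hassoc.annihilator_le
    refine ⟨⟨hassoc.isPrime, hple⟩, ?_⟩
    rintro q ⟨hq, hqann⟩ hqp
    haveI := hq
    obtain ⟨p', hp', hp'q⟩ := Ideal.exists_minimalPrimes_le hqann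
    have hp'ass := isAssociatedPrime_of_mem_minimalPrimes hp'
    exact (hmin hp'ass (hp'q.trans hqp)).trans hp'q
  · intro hp
    have hA := isAssociatedPrime_of_mem_minimalPrimes hp
    refine ⟨hA, fun q hq hqp => ?_⟩
    refine hp.2 ⟨hq.isPrime, ?_⟩ hqp
    rw [← Submodule.annihilator_top]; exact hq.annihilator_le

lemma minimalPrimes_congr {I J : Ideal R} (h : ∀ p : Ideal R, p.IsPrime → (I ≤ p ↔ J ≤ p)) :
    I.minimalPrimes = J.minimalPrimes := by
  have : (fun q : Ideal R => q.IsPrime ∧ I ≤ q) = (fun q : Ideal R => q.IsPrime ∧ J ≤ q) :=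
    funext fun q => propext (and_congr_right (h q))
  rw [Ideal.minimalPrimes, Ideal.minimalPrimes]
  unfold Ideal.IsMinimalPrime
  rw [this]

lemma mem_ann_quot {W : Submodule R M} {r : R} :
    r ∈ Module.annihilator R (M ⧸ W) ↔ ∀ x : M, r • x ∈ W := by
  rw [Module.mem_annihilator]
  constructor
  · intro h x
    have := h (Submodule.Quotient.mk x)
    rwa [← Submodule.Quotient.mk_smul, Submodule.Quotient.mk_eq_zero] at this
  · intro h m
    obtain ⟨x, rfl⟩ := Submodule.Quotient.mk_surjective W m
    rw [← Submodule.Quotient.mk_smul, Submodule.Quotient.mk_eq_zero]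
    exact h x

lemma mAss_quot_congr [IsNoetherianRing R] [Module.Finite R M] {a b : Ideal R}
    (hab : a ≤ b) (hba : b * b ≤ a) :
    mAss R (M ⧸ (a • ⊤ : Submodule R M)) = mAss R (M ⧸ (b • ⊤ : Submodule R M)) := by
  haveI : Module.Finite R (M ⧸ (a • ⊤ : Submodule R M)) :=
    Module.Finite.of_surjective _ (Submodule.mkQ_surjective _)
  haveI : Module.Finite R (M ⧸ (b • ⊤ : Submodule R M)) :=
    Module.Finite.of_surjective _ (Submodule.mkQ_surjective _)
  rw [mAss_eq_minimalPrimes, mAss_eq_minimalPrimes]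
  apply minimalPrimes_congr
  intro p hp
  constructor
  · intro hIp r hr
    have h2 : r * r ∈ Module.annihilator R (M ⧸ (a • ⊤ : Submodule R M)) := by
      rw [mem_ann_quot]
      intro x
      rw [mul_smul]
      have h1 : r • x ∈ (b • ⊤ : Submodule R M) := mem_ann_quot.mp hr x
      refine Submodule.smul_induction_on h1 ?_ ?_
      · intro c hc y _
        rw [smul_comm]
        have hry : r • y ∈ (b • ⊤ : Submodule R M) := mem_ann_quot.mp hr y
        have : c • (r • y) ∈ b • (b • ⊤ : Submodule R M) := Submodule.smul_mem_smul hc hry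
        rw [← Submodule.smul_assoc, Ideal.smul_eq_mul] at this
        exact Submodule.smul_mono_left hba this
      · intro y z hy hz
        rw [smul_add]
        exact add_mem hy hz
    exact (hp.mem_or_mem (hIp h2)).elim id id
  · intro hJp
    refine le_trans ?_ hJp
    intro r hr
    rw [mem_ann_quot] at hr ⊢
    exact fun x => Submodule.smul_mono_left hab (hr x)

/-- Artin–Rees lemma, universe-polymorphic version, transferred along a linear equivalence
to a quotient of a finite free module. -/
theorem artinRees {R : Type*} [CommRing R] [IsNoetherianRing R] {M : Type*} [AddCommGroup M]
    [Module R M] [Module.Finite R M] (I : Ideal R) (W : Submodule R M) :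
    ∃ k : ℕ, ∀ n ≥ k, (I ^ n • ⊤ ⊓ W : Submodule R M) = I ^ (n - k) • (I ^ k • ⊤ ⊓ W) := by
  obtain ⟨k0, f, hf⟩ := Module.Finite.exists_fin' R M
  let M' := (Fin k0 → R) ⧸ LinearMap.ker f
  let e : M' ≃ₗ[R] M := f.quotKerEquivOfSurjective hf
  haveI : Module.Finite R M' :=
    Module.Finite.of_surjective (LinearMap.ker f).mkQ (Submodule.mkQ_surjective _)
  obtain ⟨k, hk⟩ := Ideal.exists_pow_inf_eq_pow_smul (M := M') I (W.comap (e : M' →ₗ[R] M))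
  refine ⟨k, fun n hn => ?_⟩
  have h := congrArg (Submodule.map (e : M' →ₗ[R] M)) (hk n hn)
  rwa [Submodule.map_smul'', Submodule.map_inf (e : M' →ₗ[R] M) e.injective,
    Submodule.map_inf (e : M' →ₗ[R] M) e.injective,
    Submodule.map_smul'', Submodule.map_smul'', Submodule.map_top, LinearEquiv.range,
    Submodule.map_comap_eq_of_surjective (f := (e : M' →ₗ[R] M)) e.surjective W] at h

end Aux

theorem stmt4 (R : Type*) [CommRing R] [IsNoetherianRing R]
    (N : Type*) [AddCommGroup N] [Module R N] [Module.Finite R N] [Nontrivial N]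
    (I₁ I₂ : Ideal R)
    (h₁ : (I₁ • ⊤ : Submodule R N) ≠ ⊤) (h₂ : (I₂ • ⊤ : Submodule R N) ≠ ⊤)
    (hass : mAss R (N ⧸ ((I₁ * I₂) • ⊤ : Submodule R N)) =
      mAss R (N ⧸ (I₁ • ⊤ : Submodule R N)) ∪ mAss R (N ⧸ (I₂ • ⊤ : Submodule R N)))
    (he₁ : symbEquivAdic R I₁ N) (he₂ : symbEquivAdic R I₂ N) :
    symbEquivAdic R (I₁ * I₂) N ∧ symbEquivAdic R (I₁ ⊓ I₂) N := by
  have key₁ : symbEquivAdic R (I₁ * I₂) N := by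
    intro n
    obtain ⟨k, hk⟩ := artinRees I₁ (I₂ ^ n • ⊤ : Submodule R N)
    obtain ⟨m₁, hm₁⟩ := he₁ (n + k)
    obtain ⟨m₂, hm₂⟩ := he₂ n
    refine ⟨max m₁ m₂, ?_⟩
    rintro x ⟨s, hs, hsx⟩
    have hx₁ : x ∈ (I₁ ^ (n + k) • ⊤ : Submodule R N) := by
      refine hm₁ ⟨s, fun p hp => hs p (by rw [hass]; exact Or.inl hp), ?_⟩
      refine Submodule.smul_mono_left ?_ hsx
      calc (I₁ * I₂) ^ max m₁ m₂ ≤ I₁ ^ max m₁ m₂ :=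
            Ideal.pow_right_mono Ideal.mul_le_left _
        _ ≤ I₁ ^ m₁ := Ideal.pow_le_pow_right (le_max_left _ _)
    have hx₂ : x ∈ (I₂ ^ n • ⊤ : Submodule R N) := by
      refine hm₂ ⟨s, fun p hp => hs p (by rw [hass]; exact Or.inr hp), ?_⟩
      refine Submodule.smul_mono_left ?_ hsx
      calc (I₁ * I₂) ^ max m₁ m₂ ≤ I₂ ^ max m₁ m₂ :=
            Ideal.pow_right_mono Ideal.mul_le_right _
        _ ≤ I₂ ^ m₂ := Ideal.pow_le_pow_right (le_max_right _ _)
    have hxmem : x ∈ (I₁ ^ (n + k) • ⊤ ⊓ (I₂ ^ n • ⊤) : Submodule R N) := ⟨hx₁, hx₂⟩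
    rw [hk (n + k) (Nat.le_add_left k n), Nat.add_sub_cancel] at hxmem
    have hfin : (I₁ ^ n • (I₁ ^ k • ⊤ ⊓ I₂ ^ n • ⊤) : Submodule R N) ≤
        ((I₁ * I₂) ^ n • ⊤ : Submodule R N) := by
      rw [mul_pow, ← Ideal.smul_eq_mul, Submodule.smul_assoc]
      exact smul_mono_right _ inf_le_right
    exact hfin hxmem
  refine ⟨key₁, ?_⟩
  intro n
  obtain ⟨m, hm⟩ := key₁ n
  refine ⟨2 * m, ?_⟩
  rintro x ⟨s, hs, hsx⟩
  have hme : mAss R (N ⧸ ((I₁ * I₂) • ⊤ : Submodule R N)) =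
      mAss R (N ⧸ ((I₁ ⊓ I₂) • ⊤ : Submodule R N)) :=
    mAss_quot_congr Ideal.mul_le_inf (Ideal.mul_mono inf_le_left inf_le_right)
  have hx : x ∈ ((I₁ * I₂) ^ n • ⊤ : Submodule R N) := by
    refine hm ⟨s, fun p hp => hs p (by rw [hme] at hp; exact hp), ?_⟩
    refine Submodule.smul_mono_left ?_ hsx
    calc (I₁ ⊓ I₂) ^ (2 * m) = ((I₁ ⊓ I₂) * (I₁ ⊓ I₂)) ^ m := by rw [← pow_two, ← pow_mul]
      _ ≤ (I₁ * I₂) ^ m := Ideal.pow_right_mono (Ideal.mul_mono inf_le_left inf_le_right) _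
  exact Submodule.smul_mono_left (Ideal.pow_right_mono Ideal.mul_le_inf n) hx
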